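/- arXiv:1009.0029 — 2 statements merged into one kernel-verified Lean document; each statement's English description precedes it below -/
import Mathlib

section
/- Let Q be a finite acyclic quiver and i, j vertices of Q. Let P = P_{Q,i} (the path quiver of all paths in Q starting at i) and I = I_{Q,j} (the copath quiver of all paths in Q ending at j), as quivers over Q. Then the connected components of P ×_Q I are in bijection with the paths from i to j in Q, via the map sending a vertex (p, q) of the fiber product (p a path from i to some vertex k, q a path from k to j) to the concatenation p·q; moreover, the component corresponding to a path of length n is isomorphic over Q to the linear quiver with vertices 0, 1, …, n and arrows k−1 ⟶ k, whose structure map traces that path. -/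
/-! ## Bundled quivers and quivers over a fixed quiver -/

/-- A (bundled) quiver: a set of vertices, a set of arrows, and source/target maps. -/
structure BQuiv : Type 1 where
  V : Type
  E : Type
  s : E → V
  t : E → V

namespace BQuiv

/-- A morphism of quivers (a "coloring"). -/
@[ext]
structure Hom (A B : BQuiv) where
  onV : A.V → B.V
  onE : A.E → B.E
  hs : ∀ e : A.E, B.s (onE e) = onV (A.s e)
  ht : ∀ e : A.E, B.t (onE e) = onV (A.t e)

/-- Composition of morphisms of quivers. -/
def Hom.comp {A B C : BQuiv} (f : Hom A B) (g : Hom B C) : Hom A C where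
  onV v := g.onV (f.onV v)
  onE e := g.onE (f.onE e)
  hs e := by rw [g.hs, f.hs]
  ht e := by rw [g.ht, f.ht]

/-- `Q.IsPathFrom a b es` : the list of edges `es` forms a path from `a` to `b` in `Q`. -/
def IsPathFrom (Q : BQuiv) : Q.V → Q.V → List Q.E → Prop
  | a, b, [] => a = b
  | a, b, e :: es => Q.s e = a ∧ Q.IsPathFrom (Q.t e) b es

theorem IsPathFrom.snoc {Q : BQuiv} {a b : Q.V} {es : List Q.E}
    (h : Q.IsPathFrom a b es) {e : Q.E} (he : Q.s e = b) :
    Q.IsPathFrom a (Q.t e) (es ++ [e]) := by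
  induction es generalizing a with
  | nil =>
      simp only [IsPathFrom] at h
      subst h
      exact ⟨he, rfl⟩
  | cons f fs ih =>
      obtain ⟨h1, h2⟩ := h
      exact ⟨h1, ih h2⟩

theorem IsPathFrom.append {Q : BQuiv} {a b c : Q.V} {es fs : List Q.E}
    (h : Q.IsPathFrom a b es) (h' : Q.IsPathFrom b c fs) :
    Q.IsPathFrom a c (es ++ fs) := by
  induction es generalizing a with
  | nil =>
      simp only [IsPathFrom] at h
      subst h
      exact h'
  | cons f gs ih =>
      obtain ⟨h1, h2⟩ := h
      exact ⟨h1, ih h2⟩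

/-- `Q` is acyclic if every path from a vertex to itself is trivial. -/
def IsAcyclic (Q : BQuiv) : Prop :=
  ∀ (v : Q.V) (es : List Q.E), Q.IsPathFrom v v es → es = []

/-! ## Subquivers -/

/-- A subquiver of `Q`: a subset of vertices and a subset of arrows with endpoints in it. -/
structure Sub (Q : BQuiv) where
  verts : Set Q.V
  edges : Set Q.E
  src_mem : ∀ e ∈ edges, Q.s e ∈ verts
  tgt_mem : ∀ e ∈ edges, Q.t e ∈ verts

/-- The quiver underlying a subquiver. -/
def Sub.toBQuiv {Q : BQuiv} (T : Sub Q) : BQuiv where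
  V := T.verts
  E := T.edges
  s e := ⟨Q.s e.1, T.src_mem e.1 e.2⟩
  t e := ⟨Q.t e.1, T.tgt_mem e.1 e.2⟩

/-- The inclusion of a subquiver; `E_T` is `(T.toBQuiv, T.incl)` as a quiver over `Q`. -/
def Sub.incl {Q : BQuiv} (T : Sub Q) : Hom T.toBQuiv Q where
  onV := Subtype.val
  onE := Subtype.val
  hs _ := rfl
  ht _ := rfl

/-- `T.IsPathIn a b es` : `es` is a path from `a` to `b` lying entirely in the
subquiver `T`. -/
def Sub.IsPathIn {Q : BQuiv} (T : Sub Q) (a b : Q.V) (es : List Q.E) : Prop :=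
  a ∈ T.verts ∧ Q.IsPathFrom a b es ∧ ∀ e ∈ es, e ∈ T.edges

/-- Intersection of subquivers. -/
def Sub.inter {Q : BQuiv} (S T : Sub Q) : Sub Q where
  verts := S.verts ∩ T.verts
  edges := S.edges ∩ T.edges
  src_mem e he := ⟨S.src_mem e he.1, T.src_mem e he.2⟩
  tgt_mem e he := ⟨S.tgt_mem e he.1, T.tgt_mem e he.2⟩

/-- The full subquiver (all of `Q`). -/
def fullSub (Q : BQuiv) : Sub Q where
  verts := Set.univ
  edges := Set.univ
  src_mem _ _ := trivial
  tgt_mem _ _ := trivial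

/-- `S ⊆ T` for subquivers. -/
def Sub.le {Q : BQuiv} (S T : Sub Q) : Prop :=
  S.verts ⊆ T.verts ∧ S.edges ⊆ T.edges

/-- The successor closure of a vertex `j` in a subquiver `U`: the vertices of `U`
reachable from `j` by a path in `U`, together with all arrows of `U` between them. -/
def succClosure {Q : BQuiv} (U : Sub Q) (j : Q.V) : Sub Q where
  verts := {v | ∃ es, U.IsPathIn j v es}
  edges := {e | e ∈ U.edges ∧ (∃ es, U.IsPathIn j (Q.s e) es) ∧ ∃ es, U.IsPathIn j (Q.t e) es}
  src_mem _ he := he.2.1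
  tgt_mem _ he := he.2.2

/-- `s₀` is the unique source of the subquiver `S`. -/
def Sub.IsUniqueSource {Q : BQuiv} (S : Sub Q) (s₀ : Q.V) : Prop :=
  s₀ ∈ S.verts ∧ (∀ e ∈ S.edges, Q.t e ≠ s₀) ∧
    ∀ v ∈ S.verts, (∀ e ∈ S.edges, Q.t e ≠ v) → v = s₀

/-- `u₀` is the unique sink of the subquiver `S`. -/
def Sub.IsUniqueSink {Q : BQuiv} (S : Sub Q) (u₀ : Q.V) : Prop :=
  u₀ ∈ S.verts ∧ (∀ e ∈ S.edges, Q.s e ≠ u₀) ∧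
    ∀ v ∈ S.verts, (∀ e ∈ S.edges, Q.s e ≠ v) → v = u₀

/-! ## Path and copath quivers -/

/-- The path quiver `P_{T,t}`: vertices are the paths in `T` starting at `t` (recorded as
a pair (endpoint, list of edges)); there is one arrow `p ⟶ p·α` for each path-vertex `p`
and each arrow `α` of `T` starting at the endpoint of `p`. -/
def PathQ {Q : BQuiv} (T : Sub Q) (t : Q.V) : BQuiv where
  V := {x : Q.V × List Q.E // T.IsPathIn t x.1 x.2}
  E := {y : (Q.V × List Q.E) × Q.E //
        T.IsPathIn t y.1.1 y.1.2 ∧ y.2 ∈ T.edges ∧ Q.s y.2 = y.1.1}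
  s y := ⟨y.1.1, y.2.1⟩
  t y := ⟨(Q.t y.1.2, y.1.1.2 ++ [y.1.2]),
    ⟨y.2.1.1, (y.2.1.2.1).snoc y.2.2.2, by
      intro e he
      rcases List.mem_append.1 he with h | h
      · exact y.2.1.2.2 e h
      · rw [List.mem_singleton.1 h]; exact y.2.2.1⟩⟩

/-- The structure map of the path quiver `P_{T,t}` as a quiver over `Q`: a path is sent
to its terminal vertex, and the arrow `(p, α)` to `α`. -/
def pathPi {Q : BQuiv} (T : Sub Q) (t : Q.V) : Hom (PathQ T t) Q where
  onV p := p.1.1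
  onE y := y.1.2
  hs y := y.2.2.2
  ht _ := rfl

/-- The copath quiver `I_{T,u}`: vertices are the paths in `T` ending at `u` (recorded as
a pair (starting vertex, list of edges)); there is one arrow `α·q ⟶ q` for each vertex `q`
and each arrow `α` of `T` ending at the starting vertex of `q`. -/
def CoPathQ {Q : BQuiv} (T : Sub Q) (u : Q.V) : BQuiv where
  V := {x : Q.V × List Q.E // T.IsPathIn x.1 u x.2}
  E := {y : Q.E × (Q.V × List Q.E) //
        T.IsPathIn y.2.1 u y.2.2 ∧ y.1 ∈ T.edges ∧ Q.t y.1 = y.2.1}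
  s y := ⟨(Q.s y.1.1, y.1.1 :: y.1.2.2),
    ⟨T.src_mem _ y.2.2.1, ⟨rfl, by rw [y.2.2.2]; exact y.2.1.2.1⟩, by
      intro e he
      rcases List.mem_cons.1 he with h | h
      · rw [h]; exact y.2.2.1
      · exact y.2.1.2.2 e h⟩⟩
  t y := ⟨y.1.2, y.2.1⟩

/-- The structure map of the copath quiver `I_{T,u}` as a quiver over `Q`: a path is sent
to its starting vertex, and the arrow `(α, q)` to `α`. -/
def coPathPi {Q : BQuiv} (T : Sub Q) (u : Q.V) : Hom (CoPathQ T u) Q where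
  onV p := p.1.1
  onE y := y.1.1
  hs _ := rfl
  ht y := y.2.2.2

/-! ## Fiber products -/

/-- The fiber product of two quivers over `Q`. -/
def Fib {Q Q' Q'' : BQuiv} (f' : Hom Q' Q) (f'' : Hom Q'' Q) : BQuiv where
  V := {p : Q'.V × Q''.V // f'.onV p.1 = f''.onV p.2}
  E := {e : Q'.E × Q''.E // f'.onE e.1 = f''.onE e.2}
  s e := ⟨(Q'.s e.1.1, Q''.s e.1.2), by rw [← f'.hs, ← f''.hs, e.2]⟩
  t e := ⟨(Q'.t e.1.1, Q''.t e.1.2), by rw [← f'.ht, ← f''.ht, e.2]⟩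

/-- The structure map of the fiber product as a quiver over `Q`. -/
def fibHom {Q Q' Q'' : BQuiv} (f' : Hom Q' Q) (f'' : Hom Q'' Q) : Hom (Fib f' f'') Q where
  onV p := f'.onV p.1.1
  onE e := f'.onE e.1.1
  hs e := f'.hs e.1.1
  ht e := f'.ht e.1.1

/-! ## Connected components -/

/-- Adjacency in the underlying undirected graph. -/
def Adj (X : BQuiv) (v w : X.V) : Prop :=
  ∃ e : X.E, (X.s e = v ∧ X.t e = w) ∨ (X.s e = w ∧ X.t e = v)

/-- Connectivity in the underlying undirected graph. -/
def Conn (X : BQuiv) : X.V → X.V → Prop :=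
  Relation.ReflTransGen (Adj X)

/-- The connected component of the vertex `v₀` in `X`, as a quiver. -/
def Component (X : BQuiv) (v₀ : X.V) : BQuiv where
  V := {v : X.V // Conn X v₀ v}
  E := {e : X.E // Conn X v₀ (X.s e)}
  s e := ⟨X.s e.1, e.2⟩
  t e := ⟨X.t e.1, e.2.tail ⟨e.1, Or.inl ⟨rfl, rfl⟩⟩⟩

/-- The inclusion of a connected component. -/
def Component.incl (X : BQuiv) (v₀ : X.V) : Hom (Component X v₀) X where
  onV := Subtype.val
  onE := Subtype.val
  hs _ := rfl
  ht _ := rfl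

/-- A connected component of a quiver over `Q`, regarded as a quiver over `Q` via the
restricted structure map. -/
def componentHom {X Q : BQuiv} (h : Hom X Q) (v₀ : X.V) : Hom (Component X v₀) Q :=
  (Component.incl X v₀).comp h

/-! ## Isomorphisms over `Q` and wrappings -/

/-- An isomorphism of quivers over `Q`: a morphism of quivers commuting with the
structure maps which is bijective on vertices and on arrows. -/
structure OverIso {A B Q : BQuiv} (f : Hom A Q) (g : Hom B Q) where
  hom : Hom A B
  comm : hom.comp g = f
  bijV : Function.Bijective hom.onV
  bijE : Function.Bijective hom.onE

/-- A morphism of quivers is a wrapping if it is injective on parallel arrows. -/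
def IsWrapping {A B : BQuiv} (f : Hom A B) : Prop :=
  ∀ e₁ e₂ : A.E, A.s e₁ = A.s e₂ → A.t e₁ = A.t e₂ → f.onE e₁ = f.onE e₂ → e₁ = e₂

/-! ## Linear quivers tracing a path -/

/-- The linear quiver with vertices `0, 1, …, n` and one arrow `k-1 ⟶ k` for `1 ≤ k ≤ n`. -/
def LinQ (n : ℕ) : BQuiv where
  V := Fin (n + 1)
  E := Fin n
  s := Fin.castSucc
  t := Fin.succ

/-- The vertex reached after `k` steps along a list of edges starting at `a`. -/
def vertAt (Q : BQuiv) : Q.V → List Q.E → ℕ → Q.V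
  | a, _, 0 => a
  | a, [], _ + 1 => a
  | _, e :: es, k + 1 => vertAt Q (Q.t e) es k

theorem vertAt_s {Q : BQuiv} {a b : Q.V} {es : List Q.E} (h : Q.IsPathFrom a b es)
    (k : Fin es.length) : Q.s (es.get k) = vertAt Q a es k.1 := by
  induction es generalizing a with
  | nil => exact absurd k.2 (by simp)
  | cons e es ih =>
      obtain ⟨h1, h2⟩ := h
      rcases k with ⟨k, hk⟩
      cases k with
      | zero => exact h1
      | succ k => exact ih h2 ⟨k, Nat.lt_of_succ_lt_succ hk⟩

theorem vertAt_t {Q : BQuiv} {a b : Q.V} {es : List Q.E} (h : Q.IsPathFrom a b es)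
    (k : Fin es.length) : Q.t (es.get k) = vertAt Q a es (k.1 + 1) := by
  induction es generalizing a with
  | nil => exact absurd k.2 (by simp)
  | cons e es ih =>
      obtain ⟨h1, h2⟩ := h
      rcases k with ⟨k, hk⟩
      cases k with
      | zero =>
          cases es with
          | nil => rfl
          | cons f fs => exact (vertAt_s h2 ⟨0, by simp⟩) ▸ (h2.1).symm ▸ rfl
      | succ k => exact ih h2 ⟨k, Nat.lt_of_succ_lt_succ hk⟩

/-- The linear quiver of length `es.length` tracing the path `es` from `a` to `b`,
as a quiver over `Q`. -/
def traceHom (Q : BQuiv) (a b : Q.V) (es : List Q.E) (h : Q.IsPathFrom a b es) :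
    Hom (LinQ es.length) Q where
  onV k := vertAt Q a es k.1
  onE k := es.get k
  hs k := vertAt_s h k
  ht k := vertAt_t h k

end BQuiv

open BQuiv
namespace BQuiv

section Aux

variable {Q : BQuiv}

theorem vertAt_append {a b : Q.V} {p : List Q.E} (h : Q.IsPathFrom a b p)
    (q : List Q.E) : vertAt Q a (p ++ q) p.length = b := by
  induction p generalizing a with
  | nil =>
      simp only [IsPathFrom] at h
      subst h
      cases q <;> rfl
  | cons e es ih => exact ih h.2

theorem isPathFrom_take {a b : Q.V} {es : List Q.E} (h : Q.IsPathFrom a b es) (k : ℕ) :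
    Q.IsPathFrom a (vertAt Q a es k) (es.take k) ∧
      Q.IsPathFrom (vertAt Q a es k) b (es.drop k) := by
  induction es generalizing a k with
  | nil => cases k <;> exact ⟨rfl, h⟩
  | cons e es ih =>
      cases k with
      | zero => exact ⟨rfl, h⟩
      | succ k => exact ⟨⟨h.1, (ih h.2 k).1⟩, (ih h.2 k).2⟩

variable {i j : Q.V}

/-- Abbreviation for the fiber product of the path and copath quivers. -/
abbrev FibPI (Q : BQuiv) (i j : Q.V) : BQuiv :=
  Fib (pathPi (fullSub Q) i) (coPathPi (fullSub Q) j)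

/-- The vertex of the fiber product given by splitting `es` after `k` steps. -/
def splitVert {es : List Q.E} (h : Q.IsPathFrom i j es) (k : ℕ) : (FibPI Q i j).V :=
  ⟨(⟨(vertAt Q i es k, es.take k),
      ⟨Set.mem_univ _, (isPathFrom_take h k).1, fun _ _ => Set.mem_univ _⟩⟩,
    ⟨(vertAt Q i es k, es.drop k),
      ⟨Set.mem_univ _, (isPathFrom_take h k).2, fun _ _ => Set.mem_univ _⟩⟩), rfl⟩

/-- The edge of the fiber product given by the `k`-th edge of `es`. -/
def splitEdge {es : List Q.E} (h : Q.IsPathFrom i j es) (k : ℕ)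
    (hk : k < es.length) : (FibPI Q i j).E :=
  ⟨(⟨((vertAt Q i es k, es.take k), es.get ⟨k, hk⟩),
      ⟨⟨Set.mem_univ _, (isPathFrom_take h k).1, fun _ _ => Set.mem_univ _⟩,
        Set.mem_univ _, vertAt_s h ⟨k, hk⟩⟩⟩,
    ⟨(es.get ⟨k, hk⟩, (vertAt Q i es (k + 1), es.drop (k + 1))),
      ⟨⟨Set.mem_univ _, (isPathFrom_take h (k + 1)).2, fun _ _ => Set.mem_univ _⟩,
        Set.mem_univ _, vertAt_t h ⟨k, hk⟩⟩⟩), rfl⟩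

theorem splitEdge_congr {es : List Q.E} (h : Q.IsPathFrom i j es) {k₁ k₂ : ℕ}
    (hk₁ : k₁ < es.length) (hk₂ : k₂ < es.length) (e : k₁ = k₂) :
    splitEdge h k₁ hk₁ = splitEdge h k₂ hk₂ := by subst e; rfl

theorem fibV_ext {v w : (FibPI Q i j).V}
    (h1 : v.1.1.1 = w.1.1.1) (h2 : v.1.2.1 = w.1.2.1) : v = w := by
  rcases v with ⟨⟨⟨pv, hpv⟩, ⟨qv, hqv⟩⟩, hv⟩
  rcases w with ⟨⟨⟨pw, hpw⟩, ⟨qw, hqw⟩⟩, hw⟩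
  simp only at h1 h2
  subst h1; subst h2; rfl

theorem fibE_ext {v w : (FibPI Q i j).E}
    (h1 : v.1.1.1 = w.1.1.1) (h2 : v.1.2.1 = w.1.2.1) : v = w := by
  rcases v with ⟨⟨⟨pv, hpv⟩, ⟨qv, hqv⟩⟩, hv⟩
  rcases w with ⟨⟨⟨pw, hpw⟩, ⟨qw, hqw⟩⟩, hw⟩
  simp only at h1 h2
  subst h1; subst h2; rfl

theorem vert_canon (v : (FibPI Q i j).V) {es : List Q.E}
    (h : Q.IsPathFrom i j es) (hes : v.1.1.1.2 ++ v.1.2.1.2 = es) :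
    v = splitVert h v.1.1.1.2.length := by
  have hp : Q.IsPathFrom i v.1.1.1.1 v.1.1.1.2 := v.1.1.2.2.1
  have hc : v.1.1.1.1 = v.1.2.1.1 := v.2
  have h1 : vertAt Q i es v.1.1.1.2.length = v.1.1.1.1 := by
    rw [← hes]; exact vertAt_append hp _
  have h2 : es.take v.1.1.1.2.length = v.1.1.1.2 := by
    rw [← hes]; exact List.take_left
  have h3 : es.drop v.1.1.1.2.length = v.1.2.1.2 := by
    rw [← hes]; exact List.drop_left
  apply fibV_ext
  · exact Prod.ext h1.symm h2.symm
  · exact Prod.ext (hc ▸ h1.symm) h3.symm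

theorem edge_canon (e : (FibPI Q i j).E) {es : List Q.E} (h : Q.IsPathFrom i j es)
    (hes : e.1.1.1.1.2 ++ e.1.2.1.1 :: e.1.2.1.2.2 = es)
    (hk : e.1.1.1.1.2.length < es.length) :
    e = splitEdge h e.1.1.1.1.2.length hk := by
  have hp : Q.IsPathFrom i e.1.1.1.1.1 e.1.1.1.1.2 := e.1.1.2.1.2.1
  have hal : e.1.1.1.2 = e.1.2.1.1 := e.2
  have hget : es.get ⟨e.1.1.1.1.2.length, hk⟩ = e.1.2.1.1 := by
    simp only [List.get_eq_getElem, ← hes]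
    rw [List.getElem_append_right (le_refl _)]
    simp
  have h1 : vertAt Q i es e.1.1.1.1.2.length = e.1.1.1.1.1 := by
    rw [← hes]; exact vertAt_append hp _
  have h2 : es.take e.1.1.1.1.2.length = e.1.1.1.1.2 := by
    rw [← hes]; exact List.take_left
  have h3 : es.drop (e.1.1.1.1.2.length + 1) = e.1.2.1.2.2 := by
    rw [← hes]
    have : e.1.1.1.1.2 ++ e.1.2.1.1 :: e.1.2.1.2.2
        = (e.1.1.1.1.2 ++ [e.1.2.1.1]) ++ e.1.2.1.2.2 := by simp
    rw [this, show e.1.1.1.1.2.length + 1 = (e.1.1.1.1.2 ++ [e.1.2.1.1]).length by simp]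
    exact List.drop_left
  have h4 : vertAt Q i es (e.1.1.1.1.2.length + 1) = e.1.2.1.2.1 := by
    rw [← vertAt_t h ⟨e.1.1.1.1.2.length, hk⟩, hget]
    exact e.1.2.2.2.2
  apply fibE_ext
  · exact Prod.ext (Prod.ext h1.symm h2.symm) (hal.trans hget.symm)
  · exact Prod.ext hget.symm (Prod.ext h4.symm h3.symm)

theorem splitEdge_s {es : List Q.E} (h : Q.IsPathFrom i j es) (k : ℕ)
    (hk : k < es.length) :
    (FibPI Q i j).s (splitEdge h k hk) = splitVert h k := by
  apply fibV_ext
  · rfl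
  · refine Prod.ext (vertAt_s h ⟨k, hk⟩) ?_
    exact (List.drop_eq_getElem_cons hk).symm

theorem splitEdge_t {es : List Q.E} (h : Q.IsPathFrom i j es) (k : ℕ)
    (hk : k < es.length) :
    (FibPI Q i j).t (splitEdge h k hk) = splitVert h (k + 1) := by
  apply fibV_ext
  · refine Prod.ext (vertAt_t h ⟨k, hk⟩) ?_
    exact List.take_concat_get' es k hk
  · rfl

theorem conn_symm {X : BQuiv} {v w : X.V} (h : Conn X v w) : Conn X w v :=
  haveI : Std.Symm (Adj X) := ⟨fun _ _ hvw => hvw.elim fun e he => ⟨e, he.symm⟩⟩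
  Relation.ReflTransGen.symmetric.symm _ _ h

theorem conn_split {es : List Q.E} (h : Q.IsPathFrom i j es) {k : ℕ}
    (hk : k ≤ es.length) :
    Conn (FibPI Q i j) (splitVert h 0) (splitVert h k) := by
  induction k with
  | zero => exact Relation.ReflTransGen.refl
  | succ k ih =>
      have hk' : k < es.length := hk
      exact (ih hk'.le).tail
        ⟨splitEdge h k hk', Or.inl ⟨splitEdge_s h k hk', splitEdge_t h k hk'⟩⟩

/-- The map sending a vertex of the fiber product to the corresponding path. -/
def Fmap (v : (FibPI Q i j).V) : {es : List Q.E // Q.IsPathFrom i j es} :=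
  ⟨v.1.1.1.2 ++ v.1.2.1.2, by
    refine (v.1.1.2.2.1).append ?_
    have hc : v.1.1.1.1 = v.1.2.1.1 := v.2
    rw [hc]; exact v.1.2.2.2.1⟩

theorem Fmap_adj {v w : (FibPI Q i j).V} (h : Adj (FibPI Q i j) v w) :
    Fmap v = Fmap w := by
  obtain ⟨e, he⟩ := h
  have key : Fmap ((FibPI Q i j).s e) = Fmap ((FibPI Q i j).t e) := by
    apply Subtype.ext
    show e.1.1.1.1.2 ++ e.1.2.1.1 :: e.1.2.1.2.2
        = (e.1.1.1.1.2 ++ [e.1.1.1.2]) ++ e.1.2.1.2.2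
    have hal : e.1.1.1.2 = e.1.2.1.1 := e.2
    rw [hal, List.append_assoc, List.singleton_append]
  rcases he with ⟨h1, h2⟩ | ⟨h1, h2⟩
  · rw [← h1, ← h2]; exact key
  · rw [← h1, ← h2]; exact key.symm

theorem Fmap_conn {v w : (FibPI Q i j).V} (h : Conn (FibPI Q i j) v w) :
    Fmap v = Fmap w := by
  induction h with
  | refl => rfl
  | tail _ a ih => exact ih.trans (Fmap_adj a)

theorem comp_vert_canon (v₀ : (FibPI Q i j).V) (v : (Component (FibPI Q i j) v₀).V) :
    v.1 = splitVert (Fmap v₀).2 v.1.1.1.1.2.length ∧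
      v.1.1.1.1.2.length ≤ (Fmap v₀).1.length := by
  have h1 : Fmap v.1 = Fmap v₀ := (Fmap_conn v.2).symm
  have hes : v.1.1.1.1.2 ++ v.1.1.2.1.2 = (Fmap v₀).1 := congrArg Subtype.val h1
  refine ⟨vert_canon v.1 (Fmap v₀).2 hes, ?_⟩
  have := congrArg List.length hes
  simp only [List.length_append] at this
  omega

theorem comp_edge_canon (v₀ : (FibPI Q i j).V) (e : (Component (FibPI Q i j) v₀).E) :
    ∃ hk : e.1.1.1.1.1.2.length < (Fmap v₀).1.length,
      e.1 = splitEdge (Fmap v₀).2 e.1.1.1.1.1.2.length hk := by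
  have h1 : Fmap ((FibPI Q i j).s e.1) = Fmap v₀ := (Fmap_conn e.2).symm
  have hes : e.1.1.1.1.1.2 ++ e.1.1.2.1.1 :: e.1.1.2.1.2.2 = (Fmap v₀).1 :=
    congrArg Subtype.val h1
  have hk : e.1.1.1.1.1.2.length < (Fmap v₀).1.length := by
    have := congrArg List.length hes
    simp only [List.length_append, List.length_cons] at this
    omega
  exact ⟨hk, edge_canon e.1 (Fmap v₀).2 hes hk⟩

theorem conn_split_v₀ (v₀ : (FibPI Q i j).V) {k : ℕ} (hk : k ≤ (Fmap v₀).1.length) :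
    Conn (FibPI Q i j) v₀ (splitVert (Fmap v₀).2 k) := by
  have h0 := comp_vert_canon v₀ ⟨v₀, Relation.ReflTransGen.refl⟩
  have := (conn_symm (conn_split ((Fmap v₀).2) h0.2)).trans
    (conn_split ((Fmap v₀).2) hk)
  rwa [← h0.1] at this

end Aux

end BQuiv

/-- The connected components of `P_{Q,i} ×_Q I_{Q,j}` are in bijection
with the paths from `i` to `j` in `Q`, via the map sending a vertex `(p, q)` to the
concatenation `p·q`; the component of a vertex is isomorphic over `Q` to the linear
quiver tracing the corresponding path. -/
theorem components_pathQuiver_prod_copathQuiver_biject_paths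
    (Q : BQuiv) [Fintype Q.V] [Fintype Q.E] (hQ : Q.IsAcyclic) (i j : Q.V) :
    ∃ F : (Fib (pathPi (fullSub Q) i) (coPathPi (fullSub Q) j)).V →
        {es : List Q.E // Q.IsPathFrom i j es},
      (∀ v, (F v).1 = v.1.1.1.2 ++ v.1.2.1.2) ∧
      (∀ v w, Conn (Fib (pathPi (fullSub Q) i) (coPathPi (fullSub Q) j)) v w → F v = F w) ∧
      (∀ v w, F v = F w → Conn (Fib (pathPi (fullSub Q) i) (coPathPi (fullSub Q) j)) v w) ∧
      Function.Surjective F ∧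
      ∀ v₀, Nonempty
        (OverIso (componentHom (fibHom (pathPi (fullSub Q) i) (coPathPi (fullSub Q) j)) v₀)
          (traceHom Q i j (F v₀).1 (F v₀).2)) := by
  refine ⟨Fmap, fun v => rfl, fun v w hc => Fmap_conn hc, ?_, ?_, fun v₀ => ?_⟩
  · -- equal images are connected
    intro v w hvw
    have hv := vert_canon v (Fmap v).2 rfl
    have hw := vert_canon w (Fmap v).2 (congrArg Subtype.val hvw.symm)
    rw [hv, hw]
    have hkv : v.1.1.1.2.length ≤ (Fmap v).1.length := by
      simp only [Fmap, List.length_append]; omega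
    have hlen : (Fmap v).1.length = (Fmap w).1.length := by rw [hvw]
    have hkw : w.1.1.1.2.length ≤ (Fmap v).1.length := by
      rw [hlen]; simp only [Fmap, List.length_append]; omega
    exact (conn_symm (conn_split ((Fmap v).2) hkv)).trans (conn_split ((Fmap v).2) hkw)
  · -- surjectivity
    rintro ⟨es, h⟩
    exact ⟨splitVert h 0, Subtype.ext rfl⟩
  · -- the component of v₀ is a linear quiver over Q
    refine ⟨⟨⟨fun v => ⟨v.1.1.1.1.2.length, Nat.lt_succ_of_le (comp_vert_canon v₀ v).2⟩,
        fun e => ⟨e.1.1.1.1.1.2.length, (comp_edge_canon v₀ e).choose⟩,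
        fun e => Fin.ext rfl, fun e => ?_⟩, ?_, ⟨?_, ?_⟩, ⟨?_, ?_⟩⟩⟩
    · -- ht
      apply Fin.ext
      show e.1.1.1.1.1.2.length + 1 = (e.1.1.1.1.1.2 ++ [e.1.1.1.1.2]).length
      simp
    · -- comm
      apply Hom.ext
      · funext v
        exact (congrArg (fun x => x.1.1.1.1) (comp_vert_canon v₀ v).1).symm
      · funext e
        exact (congrArg (fun x => x.1.1.1.2) (comp_edge_canon v₀ e).choose_spec).symm
    · -- injective on vertices
      intro v w hvw
      have hk : v.1.1.1.1.2.length = w.1.1.1.1.2.length := congrArg Fin.val hvw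
      apply Subtype.ext
      rw [(comp_vert_canon v₀ v).1, hk]
      exact ((comp_vert_canon v₀ w).1).symm
    · -- surjective on vertices
      rintro ⟨k, hk⟩
      have hk' : k ≤ (Fmap v₀).1.length := Nat.lt_succ_iff.mp hk
      refine ⟨⟨splitVert (Fmap v₀).2 k, conn_split_v₀ v₀ hk'⟩, ?_⟩
      apply Fin.ext
      show ((Fmap v₀).1.take k).length = k
      simp only [List.length_take]; omega
    · -- injective on edges
      intro e f hef
      have hk : e.1.1.1.1.1.2.length = f.1.1.1.1.1.2.length := congrArg Fin.val hef
      obtain ⟨hke, he⟩ := comp_edge_canon v₀ e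
      obtain ⟨hkf, hf⟩ := comp_edge_canon v₀ f
      apply Subtype.ext
      rw [he, hf]
      exact splitEdge_congr _ hke hkf hk
    · -- surjective on edges
      rintro ⟨k, hk⟩
      refine ⟨⟨splitEdge (Fmap v₀).2 k hk, ?_⟩, ?_⟩
      · rw [splitEdge_s]
        exact conn_split_v₀ v₀ hk.le
      · apply Fin.ext
        show ((Fmap v₀).1.take k).length = k
        simp only [List.length_take]; omega
end

section
/- Let K be a field, Q a finite quiver, T a subquiver of Q, and (Q', f') a quiver over Q with Q' finite, such that the linearizations f'_* 𝟙_{Q'} and (ι_T)_* 𝟙_T are isomorphic as representations of Q over K. Then: (i) for every vertex x of T, f'⁻¹(x) has exactly one element, and f'⁻¹(x) is empty for every vertex x not in T; (ii) Q' has at least as many arrows as T; and (iii) if Q' has exactly as many arrows as T, then (Q', f') and E_T are isomorphic as quivers over Q. -/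
namespace BQuiv

open CategoryTheory

/-- The Mathlib `Quiver` structure on the vertices of a bundled quiver. -/
instance instQuiver (Q : BQuiv) : Quiver Q.V :=
  ⟨fun a b => {e : Q.E // Q.s e = a ∧ Q.t e = b}⟩

open Classical in
/-- The linearization of a quiver `(Q', f')` over `Q`, on the level of a prefunctor:
at a vertex `x` of `Q` it is the free `K`-module on the fiber `f'⁻¹(x)`, and an arrow
`α : x ⟶ y` acts by sending the basis vector at `v ∈ f'⁻¹(x)` to the sum of the basis
vectors at `t(β)` over all arrows `β` of `Q'` lying over `α` and starting at `v`. -/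
noncomputable def linPre (K : Type) [Field K] {Q' Q : BQuiv} (f' : Hom Q' Q) :
    Prefunctor Q.V (ModuleCat K) where
  obj x := ModuleCat.of K ({v : Q'.V // f'.onV v = x} →₀ K)
  map {x y} α := ModuleCat.ofHom
    (Finsupp.lsum K fun v =>
      LinearMap.toSpanSingleton K ({v : Q'.V // f'.onV v = y} →₀ K)
        (∑ᶠ β : Q'.E,
          if h : f'.onE β = α.1 ∧ Q'.s β = v.1 then
            Finsupp.single
              (⟨Q'.t β, by rw [← f'.ht, h.1]; exact α.2.2⟩ : {v : Q'.V // f'.onV v = y})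
              (1 : K)
          else 0) :
      ({v : Q'.V // f'.onV v = x} →₀ K) →ₗ[K] ({v : Q'.V // f'.onV v = y} →₀ K))

/-- The linearization `f'_* 𝟙_{Q'}` of a quiver `(Q', f')` over `Q`, as a representation
of `Q` over `K`. -/
noncomputable def linRep (K : Type) [Field K] {Q' Q : BQuiv} (f' : Hom Q' Q) :
    Paths Q.V ⥤ ModuleCat K :=
  Paths.lift (linPre K f')

end BQuiv

open BQuiv


section Aux

open CategoryTheory

namespace BQuiv

variable (K : Type) [Field K]

lemma card_eq_of_linearEquiv (A B : Type) [Finite A] [Finite B]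
    (e : (A →₀ K) ≃ₗ[K] (B →₀ K)) : Nat.card A = Nat.card B := by
  have := Fintype.ofFinite A
  have := Fintype.ofFinite B
  have h := e.finrank_eq
  rw [Module.finrank_finsupp_self, Module.finrank_finsupp_self] at h
  simpa [Nat.card_eq_fintype_card] using h

open Classical in
lemma card_val_fiber {X : Type} (S : Set X) (x : X) :
    Nat.card {w : S // Subtype.val w = x} = if x ∈ S then 1 else 0 := by
  classical
  split
  · next hx =>
      have : Unique {w : S // Subtype.val w = x} :=
        ⟨⟨⟨⟨x, hx⟩, rfl⟩⟩, fun ⟨⟨y, hy⟩, h⟩ => by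
          subst h; rfl⟩
      exact Nat.card_unique
  · next hx =>
      have : IsEmpty {w : S // Subtype.val w = x} :=
        ⟨fun ⟨⟨y, hy⟩, h⟩ => hx (h ▸ hy)⟩
      exact Nat.card_of_isEmpty

lemma finsupp_eq_single {ι : Type} [Subsingleton ι] (i : ι) (z : ι →₀ K) :
    z = Finsupp.single i (z i) := by
  ext j
  rw [Subsingleton.elim j i]
  simp

lemma linPre_map_single {Q' Q : BQuiv} (f' : Hom Q' Q) [Fintype Q'.E] {x y : Q.V}
    (a : x ⟶ y) (v : {v : Q'.V // f'.onV v = x})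
    (w : {v : Q'.V // f'.onV v = y}) [Subsingleton {v : Q'.V // f'.onV v = y}] :
    (linPre K f').map a (Finsupp.single v 1) =
      (Nat.card {β : Q'.E // f'.onE β = a.1 ∧ Q'.s β = v.1} : K) • Finsupp.single w 1 := by
  classical
  show (Finsupp.lsum (M := K) K _ : ({v : Q'.V // f'.onV v = x} →₀ K) →ₗ[K] ({v : Q'.V // f'.onV v = y} →₀ K)) (Finsupp.single v 1) = _
  rw [Finsupp.lsum_single]
  erw [LinearMap.toSpanSingleton_apply_one]
  rw [finsum_eq_sum_of_fintype]
  have hcongr : ∀ β ∈ Finset.univ,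
      (if h : f'.onE β = a.1 ∧ Q'.s β = v.1 then
        Finsupp.single
          (⟨Q'.t β, by rw [← f'.ht, h.1]; exact a.2.2⟩ : {v : Q'.V // f'.onV v = y})
          (1 : K)
      else 0)
      = if f'.onE β = a.1 ∧ Q'.s β = v.1 then Finsupp.single w (1 : K) else 0 := by
    intro β _
    split
    · congr 1
      exact Subsingleton.elim _ _
    · rfl
  rw [Finset.sum_congr rfl hcongr, ← Finset.sum_filter, Finset.sum_const,
    Nat.card_eq_fintype_card, Fintype.card_subtype]
  erw [Nat.cast_smul_eq_nsmul K]

instance inclFiberSubsingleton {Q : BQuiv} (T : Sub Q) (y : Q.V) :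
    Subsingleton {w : T.toBQuiv.V // T.incl.onV w = y} :=
  ⟨fun a b => Subtype.ext (Subtype.ext (a.2.trans b.2.symm))⟩

open Classical in
lemma incl_edge_fiber_card {Q : BQuiv} (T : Sub Q) {x y : Q.V} (a : x ⟶ y)
    (vT : {w : T.toBQuiv.V // T.incl.onV w = x}) :
    Nat.card {β : T.toBQuiv.E // T.incl.onE β = a.1 ∧ T.toBQuiv.s β = vT.1} =
      if a.1 ∈ T.edges then 1 else 0 := by
  classical
  rw [← card_val_fiber T.edges a.1]
  apply Nat.card_congr
  apply Equiv.subtypeEquivRight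
  intro β
  constructor
  · exact And.left
  · intro h
    refine ⟨h, Subtype.ext ?_⟩
    show Q.s β.1 = T.incl.onV vT.1
    rw [show β.1 = a.1 from h, a.2.1]
    exact vT.2.symm

lemma edge_fiber_card_eq {Q' Q : BQuiv} (f' : Hom Q' Q) {x y : Q.V} (a : x ⟶ y)
    (v : {v : Q'.V // f'.onV v = x}) [Subsingleton {v : Q'.V // f'.onV v = x}] :
    Nat.card {β : Q'.E // f'.onE β = a.1 ∧ Q'.s β = v.1} =
      Nat.card {β : Q'.E // f'.onE β = a.1} := by
  apply Nat.card_congr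
  apply Equiv.subtypeEquivRight
  intro β
  constructor
  · exact And.left
  · intro h
    refine ⟨h, ?_⟩
    have hm : f'.onV (Q'.s β) = x := by rw [← f'.hs, h, a.2.1]
    exact congrArg Subtype.val (Subsingleton.elim (⟨Q'.s β, hm⟩ : {v : Q'.V // f'.onV v = x}) v)

lemma card_eq_sum_card_fiber {A B : Type} [Fintype B] [Finite A] (f : A → B) :
    Nat.card A = ∑ b : B, Nat.card {a : A // f a = b} := by
  classical
  have := Fintype.ofFinite A
  rw [Nat.card_eq_fintype_card, ← Fintype.card_congr (Equiv.sigmaFiberEquiv f)]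
  rw [Fintype.card_sigma]
  exact Finset.sum_congr rfl fun b _ => (Nat.card_eq_fintype_card).symm

lemma N_pos {K : Type} [Field K] {Q Q' : BQuiv} [Fintype Q.E] [Fintype Q'.E] {T : Sub Q} {f' : Hom Q' Q}
    (t : linRep K f' ≅ linRep K T.incl)
    (hcard : ∀ x ∈ T.verts, Nat.card {v : Q'.V // f'.onV v = x} = 1)
    {α : Q.E} (hα : α ∈ T.edges) :
    Nat.card {β : Q'.E // f'.onE β = α} ≠ 0 := by
  classical
  set x := Q.s α with hxdef
  set y := Q.t α with hydef
  have hx : x ∈ T.verts := T.src_mem α hα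
  have hy : y ∈ T.verts := T.tgt_mem α hα
  obtain ⟨hsx, hnx⟩ := Nat.card_eq_one_iff_unique.mp (hcard x hx)
  obtain ⟨hsy, hny⟩ := Nat.card_eq_one_iff_unique.mp (hcard y hy)
  obtain ⟨v⟩ := hnx
  obtain ⟨w⟩ := hny
  set a : x ⟶ y := ⟨α, rfl, rfl⟩ with hadef
  set wTx : {w : T.toBQuiv.V // T.incl.onV w = x} := ⟨⟨x, hx⟩, rfl⟩ with hwTx
  set wTy : {w : T.toBQuiv.V // T.incl.onV w = y} := ⟨⟨y, hy⟩, rfl⟩ with hwTy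
  have hnat := t.hom.naturality (Quiver.Hom.toPath a)
  simp only [linRep] at hnat
  rw [Paths.lift_toPath, Paths.lift_toPath] at hnat
  rw [ModuleCat.hom_ext_iff] at hnat; erw [ModuleCat.hom_comp, ModuleCat.hom_comp] at hnat
  have h2 := LinearMap.congr_fun hnat (Finsupp.single v 1)
  erw [LinearMap.comp_apply, LinearMap.comp_apply] at h2
  -- compute LHS
  erw [linPre_map_single K f' a v w] at h2
  rw [edge_fiber_card_eq f' a v] at h2
  erw [map_smul] at h2
  -- RHS : rewrite t.hom.app x (single v 1)
  set zx : {w : T.toBQuiv.V // T.incl.onV w = x} →₀ K := t.hom.app x (Finsupp.single v 1) with hzxdef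
  set zy : {w : T.toBQuiv.V // T.incl.onV w = y} →₀ K := t.hom.app y (Finsupp.single w 1) with hzydef
  set cx : K := zx wTx with hcx
  set cy : K := zy wTy with hcy
  have hzx : zx = Finsupp.single wTx cx := finsupp_eq_single K wTx _
  have hzy : zy = Finsupp.single wTy cy := finsupp_eq_single K wTy _
  have h3 : ((Nat.card {β : Q'.E // f'.onE β = α} : K) • zy)
      = (linPre K T.incl).map a zx := h2
  rw [hzx, hzy] at h3
  rw [show Finsupp.single wTx cx = cx • Finsupp.single wTx (1 : K) by
    rw [Finsupp.smul_single', mul_one]] at h3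
  erw [map_smul] at h3
  haveI : Finite T.toBQuiv.E := inferInstanceAs (Finite {e : Q.E // e ∈ T.edges})
  haveI : Fintype T.toBQuiv.E := Fintype.ofFinite _
  erw [linPre_map_single K T.incl a wTx wTy] at h3
  have h5 : ((Nat.card {β : Q'.E // f'.onE β = α} : K) • Finsupp.single wTy cy)
      = cx • ((Nat.card {β : T.toBQuiv.E //
            T.incl.onE β = a.1 ∧ T.toBQuiv.s β = wTx.1} : K)
          • Finsupp.single wTy (1 : K)) := h3
  rw [incl_edge_fiber_card T a wTx, if_pos hα, Nat.cast_one, one_smul] at h5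
  have h4 := DFunLike.congr_fun h5 wTy
  simp only [Finsupp.smul_apply, Finsupp.single_eq_same, smul_eq_mul, mul_one] at h4
  have h3 := h4
  -- h3 : (N : K) * cy = cx
  have hinj : Function.Injective (t.hom.app x) := fun a b hab =>
    (t.app x).toLinearEquiv.injective hab
  have hcx0 : cx ≠ 0 := by
    intro h0
    have : (Finsupp.single v (1 : K)) = 0 := by
      apply hinj
      show zx = t.hom.app x 0
      rw [hzx, h0, Finsupp.single_zero, map_zero]
      rfl
    exact one_ne_zero (Finsupp.single_eq_zero.mp this)
  intro hN0
  rw [hN0, Nat.cast_zero, zero_mul] at h3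
  exact hcx0 h3.symm


end BQuiv

end Aux

/-- If the linearization of a finite quiver `(Q', f')` over `Q` is
isomorphic to the idempotent representation `(ι_T)_* 𝟙_T` of a subquiver `T`, then the
fibers of `f'` are singletons over vertices of `T` and empty elsewhere, `Q'` has at least
as many arrows as `T`, and in case of equality `(Q', f')` is isomorphic to `E_T` over
`Q`. -/
theorem structure_quiver_of_idempotent
    (K : Type) [Field K] (Q Q' : BQuiv) [Fintype Q.V] [Fintype Q.E]
    [Fintype Q'.V] [Fintype Q'.E]
    (T : Sub Q) (f' : Hom Q' Q)
    (hiso : Nonempty (linRep K f' ≅ linRep K T.incl)) :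
    (∀ x ∈ T.verts, Nat.card {v : Q'.V // f'.onV v = x} = 1) ∧
    (∀ x ∉ T.verts, IsEmpty {v : Q'.V // f'.onV v = x}) ∧
    Nat.card (↥T.edges) ≤ Nat.card Q'.E ∧
    (Nat.card Q'.E = Nat.card (↥T.edges) → Nonempty (OverIso f' T.incl)) := by
  classical
  obtain ⟨t⟩ := hiso
  haveI : Finite T.toBQuiv.V := inferInstanceAs (Finite {v : Q.V // v ∈ T.verts})
  have cardV : ∀ x : Q.V,
      Nat.card {v : Q'.V // f'.onV v = x} = if x ∈ T.verts then 1 else 0 := by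
    intro x
    have e : ({v : Q'.V // f'.onV v = x} →₀ K) ≃ₗ[K]
        ({w : T.toBQuiv.V // T.incl.onV w = x} →₀ K) := (t.app x).toLinearEquiv
    rw [card_eq_of_linearEquiv K _ _ e]
    exact card_val_fiber T.verts x
  have part1 : ∀ x ∈ T.verts, Nat.card {v : Q'.V // f'.onV v = x} = 1 := by
    intro x hx
    rw [cardV x, if_pos hx]
  have part2 : ∀ x ∉ T.verts, IsEmpty {v : Q'.V // f'.onV v = x} := by
    intro x hx
    have h0 := cardV x
    rw [if_neg hx] at h0
    rcases Nat.card_eq_zero.mp h0 with h | h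
    · exact h
    · exact absurd h (not_infinite_iff_finite.mpr inferInstance)
  have hNpos : ∀ α ∈ T.edges, Nat.card {β : Q'.E // f'.onE β = α} ≠ 0 :=
    fun α hα => N_pos t part1 hα
  have hQ'card : Nat.card Q'.E = ∑ α : Q.E, Nat.card {β : Q'.E // f'.onE β = α} :=
    card_eq_sum_card_fiber f'.onE
  have hTcard : Nat.card (↥T.edges) = ∑ α : Q.E, if α ∈ T.edges then 1 else 0 := by
    rw [card_eq_sum_card_fiber (Subtype.val : ↥T.edges → Q.E)]
    exact Finset.sum_congr rfl fun α _ => card_val_fiber T.edges α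
  have hle : ∀ α : Q.E,
      (if α ∈ T.edges then 1 else 0) ≤ Nat.card {β : Q'.E // f'.onE β = α} := by
    intro α
    split
    · next h => exact Nat.one_le_iff_ne_zero.mpr (hNpos α h)
    · exact Nat.zero_le _
  have hineq : Nat.card (↥T.edges) ≤ Nat.card Q'.E := by
    rw [hQ'card, hTcard]
    exact Finset.sum_le_sum fun α _ => hle α
  refine ⟨part1, part2, hineq, ?_⟩
  intro heq
  have hpt : ∀ α ∈ Finset.univ,
      (if α ∈ T.edges then (1 : ℕ) else 0) = Nat.card {β : Q'.E // f'.onE β = α} :=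
    (Finset.sum_eq_sum_iff_of_le (fun α _ => hle α)).mp
      (by rw [← hTcard, ← hQ'card, heq])
  have memV : ∀ v : Q'.V, f'.onV v ∈ T.verts := by
    intro v
    by_contra h
    exact (part2 _ h).false ⟨v, rfl⟩
  have memE : ∀ e : Q'.E, f'.onE e ∈ T.edges := by
    intro e
    by_contra h
    have h0 := (hpt (f'.onE e) (Finset.mem_univ _)).symm
    rw [if_neg h] at h0
    rcases Nat.card_eq_zero.mp h0 with h' | h'
    · exact h'.false ⟨e, rfl⟩
    · exact absurd h' (not_infinite_iff_finite.mpr inferInstance)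
  have cardE1 : ∀ α ∈ T.edges, Nat.card {β : Q'.E // f'.onE β = α} = 1 := by
    intro α hα
    have h0 := (hpt α (Finset.mem_univ _)).symm
    rwa [if_pos hα] at h0
  refine ⟨⟨{ onV := fun v => ⟨f'.onV v, memV v⟩
             onE := fun e => ⟨f'.onE e, memE e⟩
             hs := fun e => Subtype.ext (f'.hs e)
             ht := fun e => Subtype.ext (f'.ht e) }, rfl, ⟨?_, ?_⟩, ⟨?_, ?_⟩⟩⟩
  · intro v₁ v₂ h
    have h' : f'.onV v₁ = f'.onV v₂ := congrArg Subtype.val h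
    obtain ⟨hsub, -⟩ := Nat.card_eq_one_iff_unique.mp (part1 _ (memV v₂))
    exact congrArg Subtype.val
      (@Subsingleton.elim _ hsub (⟨v₁, h'⟩ : {v : Q'.V // f'.onV v = f'.onV v₂}) ⟨v₂, rfl⟩)
  · rintro ⟨x, hx⟩
    obtain ⟨-, ⟨v⟩⟩ := Nat.card_eq_one_iff_unique.mp (part1 x hx)
    exact ⟨v.1, Subtype.ext v.2⟩
  · intro e₁ e₂ h
    have h' : f'.onE e₁ = f'.onE e₂ := congrArg Subtype.val h
    obtain ⟨hsub, -⟩ := Nat.card_eq_one_iff_unique.mp (cardE1 _ (memE e₂))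
    exact congrArg Subtype.val
      (@Subsingleton.elim _ hsub (⟨e₁, h'⟩ : {β : Q'.E // f'.onE β = f'.onE e₂}) ⟨e₂, rfl⟩)
  · rintro ⟨α, hα⟩
    obtain ⟨-, ⟨β⟩⟩ := Nat.card_eq_one_iff_unique.mp (cardE1 α hα)
    exact ⟨β.1, Subtype.ext β.2⟩
end
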